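/- Fix a null frame e_0 = ℓ, e_1 = n, m_2,…,m_{N−1} for the Minkowski form η on ℝ^N. Let (K^λ)_{λ∈Λ} be a family of skew-symmetric bilinear forms on ℝ^N that are null and mutually orthogonal in the bivector inner product, ⟨K^λ, K^μ⟩ = 0 for all λ, μ, and that share the alignment K^λ_{0i} = K^λ(ℓ, m_i) = 0 for all spatial i. Then there exist a skew-symmetric bilinear form M with ⟨M,M⟩ = 0 and M_{0i} = M_{1i} = 0 for all spatial i (a null, bi-aligned bivector), and scalars C_λ, such that K^λ_{ij} = C_λ M_{ij} and K^λ_{01} = C_λ M_{01} for every λ and all spatial i, j. -/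

import Mathlib

open Matrix

/-! Null-frame formalism: we work with the components of tensors with respect to a
null frame `e_0 = ℓ, e_1 = n, e_2 = m_2, …, e_{N−1} = m_{N−1}` for the Minkowski
form `η` on `ℝ^N` (so `η(ℓ,n) = 1`, `η(m_i,m_j) = δ_{ij}`, all other frame products
vanish).  `ηnf N` is the matrix of frame components `η_{AB}`, and `ηup N = (ηnf N)⁻¹`
is the matrix of the inverse-metric components `η^{AB}` used to raise indices.
Spatial indices are those `i : Fin N` with `2 ≤ i`. -/

/-- Frame components `η_{AB}` of the Minkowski form in a null frame. -/
def ηnf (N : ℕ) : Matrix (Fin N) (Fin N) ℝ :=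
  Matrix.of fun A B =>
    if ((A : ℕ) = 0 ∧ (B : ℕ) = 1) ∨ ((A : ℕ) = 1 ∧ (B : ℕ) = 0) then 1
    else if A = B ∧ 2 ≤ (A : ℕ) then 1 else 0

/-- Components `η^{AB}` of the inverse metric in a null frame. -/
noncomputable def ηup (N : ℕ) : Matrix (Fin N) (Fin N) ℝ := (ηnf N)⁻¹

/-- The bivector inner product in null-frame components:
`⟨J,K⟩ = (1/2) Σ_{a,b} J_{ab} K^{ab}` with indices raised by the inverse metric. -/
noncomputable def bivInner (N : ℕ) (J K : Matrix (Fin N) (Fin N) ℝ) : ℝ :=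
  (1 / 2 : ℝ) * ∑ a, ∑ b, ∑ a', ∑ b', J a b * ηup N a a' * ηup N b b' * K a' b'

def sw (N : ℕ) (hN : 2 ≤ N) (a : Fin N) : Fin N :=
  if (a : ℕ) = 0 then ⟨1, hN⟩ else if (a : ℕ) = 1 then ⟨0, Nat.lt_of_lt_of_le (by norm_num) hN⟩ else a

lemma etanf_apply (N : ℕ) (hN : 2 ≤ N) (a b : Fin N) :
    ηnf N a b = if b = sw N hN a then 1 else 0 := by
  rcases a with ⟨a, ha⟩; rcases b with ⟨b, hb⟩
  unfold ηnf sw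
  simp only [Matrix.of_apply]
  split_ifs <;> simp_all only [Fin.mk.injEq, true_and, false_and, and_true, and_false, or_false, false_or, true_or, or_true, not_true, not_false_iff] <;> first | rfl | omega

lemma sw_sw (N : ℕ) (hN : 2 ≤ N) (a : Fin N) : sw N hN (sw N hN a) = a := by
  rcases a with ⟨a, ha⟩
  unfold sw
  split_ifs <;> simp_all only [Fin.mk.injEq, true_and, false_and, and_true, and_false, or_false, false_or, true_or, or_true, not_true, not_false_iff] <;> first | rfl | omega

lemma etaup_eq (N : ℕ) (hN : 2 ≤ N) : ηup N = ηnf N := by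
  apply Matrix.inv_eq_right_inv
  ext a b
  rw [Matrix.mul_apply]
  have hiff : ∀ x : Fin N, (b = sw N hN x) ↔ (x = sw N hN b) :=
    fun x => ⟨fun h => by rw [h, sw_sw], fun h => by rw [h, sw_sw]⟩
  simp only [etanf_apply N hN, hiff, ite_mul, one_mul, zero_mul, Finset.sum_ite_eq',
    Finset.mem_univ, if_true]
  by_cases hab : a = b
  · simp [hab, Matrix.one_apply]
  · have hsw : sw N hN a ≠ sw N hN b := fun h => hab (by rw [← sw_sw N hN a, h, sw_sw])
    simp [Matrix.one_apply, hab, hsw]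

lemma bivInner_eq (N : ℕ) (hN : 2 ≤ N) (J K : Matrix (Fin N) (Fin N) ℝ) :
    bivInner N J K = (1 / 2 : ℝ) * ∑ a, ∑ b, J a b * K (sw N hN a) (sw N hN b) := by
  unfold bivInner
  rw [etaup_eq N hN]
  congr 1
  refine Finset.sum_congr rfl fun a _ => Finset.sum_congr rfl fun b _ => ?_
  simp [etanf_apply N hN, mul_ite, ite_mul, mul_zero, zero_mul, Finset.sum_ite_eq']

lemma sw_zero (N : ℕ) (hN : 2 ≤ N) : sw N hN ⟨0, Nat.lt_of_lt_of_le (by norm_num) hN⟩ = ⟨1, Nat.lt_of_lt_of_le (by norm_num) hN⟩ := by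
  unfold sw; simp

lemma sw_one (N : ℕ) (hN : 2 ≤ N) : sw N hN ⟨1, Nat.lt_of_lt_of_le (by norm_num) hN⟩ = ⟨0, Nat.lt_of_lt_of_le (by norm_num) hN⟩ := by
  unfold sw; simp

lemma sw_spatial (N : ℕ) (hN : 2 ≤ N) (i : Fin N) (hi : 2 ≤ (i : ℕ)) : sw N hN i = i := by
  unfold sw; split_ifs <;> first | rfl | omega

lemma bivInner_aligned (N : ℕ) (hN : 2 ≤ N) (J K : Matrix (Fin N) (Fin N) ℝ)
    (hJ : Jᵀ = -J) (hK : Kᵀ = -K)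
    (hJa : ∀ i : Fin N, 2 ≤ (i : ℕ) → J ⟨0, Nat.lt_of_lt_of_le (by norm_num) hN⟩ i = 0)
    (hKa : ∀ i : Fin N, 2 ≤ (i : ℕ) → K ⟨0, Nat.lt_of_lt_of_le (by norm_num) hN⟩ i = 0) :
    bivInner N J K =
      (1 / 2 : ℝ) * (∑ i : Fin N, ∑ j : Fin N,
          if 2 ≤ (i : ℕ) ∧ 2 ≤ (j : ℕ) then J i j * K i j else 0)
        - J ⟨0, Nat.lt_of_lt_of_le (by norm_num) hN⟩ ⟨1, Nat.lt_of_lt_of_le (by norm_num) hN⟩ * K ⟨0, Nat.lt_of_lt_of_le (by norm_num) hN⟩ ⟨1, Nat.lt_of_lt_of_le (by norm_num) hN⟩ := by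
  set z : Fin N := ⟨0, Nat.lt_of_lt_of_le (by norm_num) hN⟩ with hz
  set o : Fin N := ⟨1, Nat.lt_of_lt_of_le (by norm_num) hN⟩ with ho
  have hJs : ∀ a b : Fin N, J b a = -J a b := by
    intro a b; have := congrFun (congrFun hJ a) b; simpa [Matrix.transpose_apply] using this
  have hKs : ∀ a b : Fin N, K b a = -K a b := by
    intro a b; have := congrFun (congrFun hK a) b; simpa [Matrix.transpose_apply] using this
  have hzo : z ≠ o := by simp only [hz, ho, ne_eq, Fin.mk.injEq]; omega
  have hz2 : ¬ 2 ≤ ((z : Fin N) : ℕ) := by simp [hz]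
  have ho2 : ¬ 2 ≤ ((o : Fin N) : ℕ) := by simp [ho]
  have key : ∀ a b : Fin N, J a b * K (sw N hN a) (sw N hN b) =
      (if 2 ≤ (a : ℕ) ∧ 2 ≤ (b : ℕ) then J a b * K a b else 0)
      + ((if a = z then if b = o then -(J z o * K z o) else 0 else 0)
        + (if a = o then if b = z then -(J z o * K z o) else 0 else 0)) := by
    intro a b
    rcases Nat.lt_or_ge (a : ℕ) 2 with ha2 | ha2
    · have ha01 : a = z ∨ a = o := by
        rcases Nat.lt_or_ge (a : ℕ) 1 with h | h
        · left; simp [hz, Fin.ext_iff]; omega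
        · right; simp [ho, Fin.ext_iff]; omega
      rcases Nat.lt_or_ge (b : ℕ) 2 with hb2 | hb2
      · have hb01 : b = z ∨ b = o := by
          rcases Nat.lt_or_ge (b : ℕ) 1 with h | h
          · left; simp [hz, Fin.ext_iff]; omega
          · right; simp [ho, Fin.ext_iff]; omega
        rcases ha01 with rfl | rfl <;> rcases hb01 with rfl | rfl
        · have h0 : J z z = 0 := by have := hJs z z; linarith
          simp [h0, hzo]
        · rw [show sw N hN z = o from sw_zero N hN, show sw N hN o = z from sw_one N hN]
          have h0 : K o z = -K z o := hKs z o
          simp only [h0, if_pos rfl, if_neg hzo, if_neg (fun h : (2:ℕ) ≤ (z:ℕ) ∧ _ => hz2 h.1)]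
          simp
        · rw [show sw N hN o = z from sw_one N hN, show sw N hN z = o from sw_zero N hN]
          have h0 : J o z = -J z o := hJs z o
          simp only [h0, if_pos rfl, if_neg (Ne.symm hzo), if_neg hzo,
            if_neg (fun h : (2:ℕ) ≤ (o:ℕ) ∧ _ => ho2 h.1)]
          simp
        · have h0 : J o o = 0 := by have := hJs o o; linarith
          simp [h0, Ne.symm hzo]
      · have hbz : b ≠ z := by simp [hz, Fin.ext_iff]; omega
        have hbo : b ≠ o := by simp [ho, Fin.ext_iff]; omega
        rw [sw_spatial N hN b hb2]
        rcases ha01 with rfl | rfl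
        · have h0 : J z b = 0 := hJa b hb2
          simp [h0, hbo, hbz, hz2]
        · rw [show sw N hN o = z from sw_one N hN]
          have h0 : K z b = 0 := hKa b hb2
          simp [h0, hbz, Ne.symm hzo, ho2]
    · have haz : a ≠ z := by simp [hz, Fin.ext_iff]; omega
      have hao : a ≠ o := by simp [ho, Fin.ext_iff]; omega
      rw [sw_spatial N hN a ha2]
      rcases Nat.lt_or_ge (b : ℕ) 2 with hb2 | hb2
      · have hb01 : b = z ∨ b = o := by
          rcases Nat.lt_or_ge (b : ℕ) 1 with h | h
          · left; simp [hz, Fin.ext_iff]; omega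
          · right; simp [ho, Fin.ext_iff]; omega
        rcases hb01 with rfl | rfl
        · have h0 : J a z = 0 := by rw [hJs z a, hJa a ha2]; ring
          simp [h0, haz, hao, hz2]
        · rw [show sw N hN o = z from sw_one N hN]
          have h0 : K a z = 0 := by rw [hKs z a, hKa a ha2]; ring
          simp [h0, haz, hao, ho2]
      · rw [sw_spatial N hN b hb2]
        simp [ha2, hb2, haz, hao]
  have hsum : ∀ (c : ℝ) (u v : Fin N),
      (∑ x : Fin N, ∑ y : Fin N, if x = u then if y = v then c else 0 else 0) = c := by
    intro c u v
    have h1 : ∀ x : Fin N, (∑ y : Fin N, if x = u then if y = v then c else 0 else 0)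
        = if x = u then c else 0 := by
      intro x; split_ifs with h <;> simp [Finset.sum_ite_eq']
    simp [h1, Finset.sum_ite_eq']
  rw [bivInner_eq N hN]
  simp only [key, Finset.sum_add_distrib, hsum]
  ring

lemma spatial_sq_zero (N : ℕ) (f : Fin N → Fin N → ℝ)
    (h : (∑ i : Fin N, ∑ j : Fin N,
        if 2 ≤ (i : ℕ) ∧ 2 ≤ (j : ℕ) then f i j * f i j else 0) = 0)
    (i j : Fin N) (hi : 2 ≤ (i : ℕ)) (hj : 2 ≤ (j : ℕ)) : f i j = 0 := by
  have hnn : ∀ a b : Fin N,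
      0 ≤ (if 2 ≤ (a : ℕ) ∧ 2 ≤ (b : ℕ) then f a b * f a b else 0) := by
    intro a b; split
    · exact mul_self_nonneg _
    · exact le_refl 0
  have h1 := (Finset.sum_eq_zero_iff_of_nonneg
    (fun a _ => Finset.sum_nonneg fun b _ => hnn a b)).mp h i (Finset.mem_univ i)
  have h2 := (Finset.sum_eq_zero_iff_of_nonneg (fun b _ => hnn i b)).mp h1 j (Finset.mem_univ j)
  rw [if_pos ⟨hi, hj⟩] at h2
  exact mul_self_eq_zero.mp h2

lemma spatial_sum_expand (N : ℕ) (a b : ℝ) (X Y : Matrix (Fin N) (Fin N) ℝ) :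
    (∑ i : Fin N, ∑ j : Fin N, if 2 ≤ (i : ℕ) ∧ 2 ≤ (j : ℕ) then
        (a * X i j - b * Y i j) * (a * X i j - b * Y i j) else 0)
    = a * a * (∑ i : Fin N, ∑ j : Fin N,
          if 2 ≤ (i : ℕ) ∧ 2 ≤ (j : ℕ) then X i j * X i j else 0)
      - 2 * a * b * (∑ i : Fin N, ∑ j : Fin N,
          if 2 ≤ (i : ℕ) ∧ 2 ≤ (j : ℕ) then X i j * Y i j else 0)
      + b * b * (∑ i : Fin N, ∑ j : Fin N,
          if 2 ≤ (i : ℕ) ∧ 2 ≤ (j : ℕ) then Y i j * Y i j else 0) := by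
  simp only [Finset.mul_sum, ← Finset.sum_sub_distrib, ← Finset.sum_add_distrib]
  refine Finset.sum_congr rfl fun i _ => Finset.sum_congr rfl fun j _ => ?_
  split_ifs <;> ring

/-- **Proposition C.3** (`prop:aligned-ortho`): let `(K^λ)` be a family of null,
mutually orthogonal bivectors (skew-symmetric bilinear forms, given here by their
null-frame components) with a common alignment `K^λ_{0i} = 0` for all spatial `i`.
Then there is a null, bi-aligned bivector `M` (`⟨M,M⟩ = 0`, `M_{0i} = M_{1i} = 0`) and
scalars `C_λ` with `K^λ_{ij} = C_λ M_{ij}` and `K^λ_{01} = C_λ M_{01}`. -/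
theorem aligned_orthogonal_bivectors (N : ℕ) (hN : 2 ≤ N) {Λ : Type*}
    (K : Λ → Matrix (Fin N) (Fin N) ℝ)
    (hskew : ∀ l, (K l)ᵀ = -(K l))
    (horth : ∀ l m : Λ, bivInner N (K l) (K m) = 0)
    (halign : ∀ l, ∀ i : Fin N, 2 ≤ (i : ℕ) → K l ⟨0, by omega⟩ i = 0) :
    ∃ M : Matrix (Fin N) (Fin N) ℝ, Mᵀ = -M ∧ bivInner N M M = 0 ∧
      (∀ i : Fin N, 2 ≤ (i : ℕ) → M ⟨0, by omega⟩ i = 0 ∧ M ⟨1, by omega⟩ i = 0) ∧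
      ∃ C : Λ → ℝ, ∀ l,
        (∀ i j : Fin N, 2 ≤ (i : ℕ) → 2 ≤ (j : ℕ) → K l i j = C l * M i j) ∧
        K l ⟨0, by omega⟩ ⟨1, by omega⟩ = C l * M ⟨0, by omega⟩ ⟨1, by omega⟩ := by
  set z : Fin N := ⟨0, by omega⟩ with hz
  set o : Fin N := ⟨1, by omega⟩ with ho
  have hzo : z ≠ o := by simp only [hz, ho, ne_eq, Fin.mk.injEq]; omega
  -- the orthogonality relation in components
  have hrel : ∀ l m : Λ, (∑ i : Fin N, ∑ j : Fin N,
      if 2 ≤ (i : ℕ) ∧ 2 ≤ (j : ℕ) then K l i j * K m i j else 0)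
      = 2 * (K l z o * K m z o) := by
    intro l m
    have h := horth l m
    rw [bivInner_aligned N hN (K l) (K m) (hskew l) (hskew m) (halign l) (halign m)] at h
    linarith
  by_cases hall : ∀ l, K l z o = 0
  · -- all bivectors vanish entirely (in the relevant components): take M = 0
    refine ⟨0, by simp, ?_, fun i hi => ⟨rfl, rfl⟩, 0, fun l => ⟨?_, ?_⟩⟩
    · simp [bivInner]
    · intro i j hi hj
      have h0 := hrel l l
      rw [hall l] at h0
      simp only [mul_zero, zero_mul] at h0
      have := spatial_sq_zero N (fun i j => K l i j) h0 i j hi hj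
      simpa using this
    · simp [hall l]
  · push_neg at hall
    obtain ⟨l0, hl0⟩ := hall
    set a : ℝ := K l0 z o with ha
    -- construct M
    set M : Matrix (Fin N) (Fin N) ℝ := Matrix.of fun A B =>
      if A = z ∧ B = o then a else if A = o ∧ B = z then -a
      else if 2 ≤ (A : ℕ) ∧ 2 ≤ (B : ℕ) then K l0 A B else 0 with hM
    have hz2 : ¬ 2 ≤ ((z : Fin N) : ℕ) := by simp [hz]
    have ho2 : ¬ 2 ≤ ((o : Fin N) : ℕ) := by simp [ho]
    have hMzo : M z o = a := by simp [hM]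
    have hMoz : M o z = -a := by simp [hM, hzo, Ne.symm hzo]
    have hMsp : ∀ i j : Fin N, 2 ≤ (i : ℕ) → 2 ≤ (j : ℕ) → M i j = K l0 i j := by
      intro i j hi hj
      have hiz : i ≠ z := fun h => hz2 (h ▸ hi)
      have hio : i ≠ o := fun h => ho2 (h ▸ hi)
      have hjz : j ≠ z := fun h => hz2 (h ▸ hj)
      have hjo : j ≠ o := fun h => ho2 (h ▸ hj)
      simp [hM, hiz, hio, hjz, hjo, hi, hj]
    have hKsk : ∀ (l : Λ) (A B : Fin N), K l B A = -K l A B := by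
      intro l A B
      have := congrFun (congrFun (hskew l) A) B
      simpa [Matrix.transpose_apply] using this
    have hMalign : ∀ i : Fin N, 2 ≤ (i : ℕ) → M z i = 0 ∧ M o i = 0 := by
      intro i hi
      have hiz : i ≠ z := fun h => hz2 (h ▸ hi)
      have hio : i ≠ o := fun h => ho2 (h ▸ hi)
      constructor
      · simp [hM, hio, hz2, hzo]
      · simp [hM, hiz, Ne.symm hzo, ho2, hzo]
    have hcase : ∀ A : Fin N, A = z ∨ A = o ∨ 2 ≤ (A : ℕ) := by
      intro A
      rcases Nat.lt_or_ge (A : ℕ) 2 with h | h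
      · rcases Nat.lt_or_ge (A : ℕ) 1 with h1 | h1
        · left; simp only [hz, Fin.ext_iff]; omega
        · right; left; simp only [ho, Fin.ext_iff]; omega
      · right; right; exact h
    have hMzz : M z z = 0 := by simp [hM, hzo, Ne.symm hzo, hz2]
    have hMoo : M o o = 0 := by simp [hM, hzo, Ne.symm hzo, ho2]
    have hMalign' : ∀ i : Fin N, 2 ≤ (i : ℕ) → M i z = 0 ∧ M i o = 0 := by
      intro i hi
      have hiz : i ≠ z := fun h => hz2 (h ▸ hi)
      have hio : i ≠ o := fun h => ho2 (h ▸ hi)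
      constructor
      · simp [hM, hiz, hio, hz2]
      · simp [hM, hiz, hio, ho2]
    have hMskew : Mᵀ = -M := by
      ext A B
      simp only [Matrix.transpose_apply, Matrix.neg_apply]
      rcases hcase A with rfl | rfl | hA <;> rcases hcase B with rfl | rfl | hB
      · rw [hMzz]; ring
      · rw [hMzo, hMoz]
      · rw [(hMalign' B hB).1, (hMalign B hB).1]; ring
      · rw [hMzo, hMoz]; ring
      · rw [hMoo]; ring
      · rw [(hMalign' B hB).2, (hMalign B hB).2]; ring
      · rw [(hMalign A hA).1, (hMalign' A hA).1]; ring
      · rw [(hMalign A hA).2, (hMalign' A hA).2]; ring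
      · rw [hMsp B A hB hA, hMsp A B hA hB, hKsk l0 A B]
    -- C
    refine ⟨M, hMskew, ?_, hMalign, fun l => K l z o / a, fun l => ⟨?_, ?_⟩⟩
    · -- M is null
      rw [bivInner_aligned N hN M M hMskew hMskew (fun i hi => (hMalign i hi).1)
        (fun i hi => (hMalign i hi).1)]
      have hS : (∑ i : Fin N, ∑ j : Fin N,
          if 2 ≤ (i : ℕ) ∧ 2 ≤ (j : ℕ) then M i j * M i j else 0)
          = (∑ i : Fin N, ∑ j : Fin N,
          if 2 ≤ (i : ℕ) ∧ 2 ≤ (j : ℕ) then K l0 i j * K l0 i j else 0) := by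
        refine Finset.sum_congr rfl fun i _ => Finset.sum_congr rfl fun j _ => ?_
        split_ifs with h
        · rw [hMsp i j h.1 h.2]
        · rfl
      rw [hS, hMzo, hrel l0 l0]
      ring
    · -- spatial entries proportional
      intro i j hi hj
      have hzero : a * K l i j - K l z o * K l0 i j = 0 := by
        have hexp := spatial_sum_expand N a (K l z o) (K l) (K l0)
        rw [hrel l l, hrel l l0, hrel l0 l0] at hexp
        have h0 : (∑ i : Fin N, ∑ j : Fin N, if 2 ≤ (i : ℕ) ∧ 2 ≤ (j : ℕ) then
            (a * K l i j - K l z o * K l0 i j) * (a * K l i j - K l z o * K l0 i j)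
            else 0) = 0 := by
          rw [hexp]; ring
        exact spatial_sq_zero N (fun i j => a * K l i j - K l z o * K l0 i j) h0 i j hi hj
      rw [hMsp i j hi hj]
      field_simp
      linarith
    · rw [hMzo]
      field_simp
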